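/- Let φ¹, φ², φ³ : ℝ² → ℝ be twice continuously differentiable, and define σ¹¹ = ∂₂φ¹, σ¹² = −∂₁φ¹, σ²¹ = −∂₂φ², σ²² = ∂₁φ², μ¹ = ∂₂φ³ + φ¹, μ² = −∂₁φ³ − φ². Then the homogeneous planar Cosserat equations hold identically: ∂₁σ¹¹ + ∂₂σ¹² = 0, ∂₁σ²¹ + ∂₂σ²² = 0, and ∂₁μ¹ + ∂₂μ² + σ¹² − σ²¹ = 0. -/

import Mathlib

/-- Partial derivative with respect to the first variable of a function on `ℝ²`. -/
noncomputable def pd1 (f : ℝ × ℝ → ℝ) (x : ℝ × ℝ) : ℝ := fderiv ℝ f x (1, 0)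

/-- Partial derivative with respect to the second variable of a function on `ℝ²`. -/
noncomputable def pd2 (f : ℝ × ℝ → ℝ) (x : ℝ × ℝ) : ℝ := fderiv ℝ f x (0, 1)

lemma diff_fderiv {f : ℝ × ℝ → ℝ} (hf : ContDiff ℝ 2 f) :
    Differentiable ℝ (fderiv ℝ f) :=
  (hf.fderiv_right (m := 1) (by norm_num)).differentiable one_ne_zero

lemma pd_pd {f : ℝ × ℝ → ℝ} (hf : ContDiff ℝ 2 f) (x v w : ℝ × ℝ) :
    fderiv ℝ (fun y => fderiv ℝ f y w) x v = fderiv ℝ (fderiv ℝ f) x v w := by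
  have h := fderiv_clm_apply (𝕜 := ℝ) (c := fderiv ℝ f) (u := fun _ => w)
    ((diff_fderiv hf) x) (differentiableAt_const w)
  rw [h]
  simp

lemma pd_comm {f : ℝ × ℝ → ℝ} (hf : ContDiff ℝ 2 f) (x : ℝ × ℝ) :
    pd1 (fun y => pd2 f y) x = pd2 (fun y => pd1 f y) x := by
  have hs : IsSymmSndFDerivAt ℝ f x := (hf.contDiffAt).isSymmSndFDerivAt (by simp)
  simp only [pd1, pd2]
  rw [pd_pd hf, pd_pd hf, hs]

lemma diff_pd1 {f : ℝ × ℝ → ℝ} (hf : ContDiff ℝ 2 f) :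
    Differentiable ℝ (fun y => pd1 f y) := fun x => by
  have := ((diff_fderiv hf) x).clm_apply (differentiableAt_const ((1 : ℝ), (0 : ℝ)))
  exact this

lemma diff_pd2 {f : ℝ × ℝ → ℝ} (hf : ContDiff ℝ 2 f) :
    Differentiable ℝ (fun y => pd2 f y) := fun x => by
  have := ((diff_fderiv hf) x).clm_apply (differentiableAt_const ((0 : ℝ), (1 : ℝ)))
  exact this

/-- The first-order parametrization of the planar Cosserat equations by three
potentials `φ¹, φ², φ³`: setting `σ¹¹ = ∂₂φ¹`, `σ¹² = −∂₁φ¹`, `σ²¹ = −∂₂φ²`,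
`σ²² = ∂₁φ²`, `μ¹ = ∂₂φ³ + φ¹`, `μ² = −∂₁φ³ − φ²`, the homogeneous planar
Cosserat equations hold identically. -/
theorem cosserat_first_order_parametrization
    (φ1 φ2 φ3 : ℝ × ℝ → ℝ)
    (hφ1 : ContDiff ℝ 2 φ1) (hφ2 : ContDiff ℝ 2 φ2) (hφ3 : ContDiff ℝ 2 φ3) :
    ∀ x : ℝ × ℝ,
      pd1 (fun y => pd2 φ1 y) x + pd2 (fun y => -pd1 φ1 y) x = 0 ∧
      pd1 (fun y => -pd2 φ2 y) x + pd2 (fun y => pd1 φ2 y) x = 0 ∧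
      pd1 (fun y => pd2 φ3 y + φ1 y) x + pd2 (fun y => -pd1 φ3 y - φ2 y) x
        + (-pd1 φ1 x) - (-pd2 φ2 x) = 0 := by
  intro x
  have neg1 : ∀ f : ℝ × ℝ → ℝ, pd1 (fun y => -f y) x = -pd1 f x := by
    intro f; simp [pd1, fderiv_neg]
  have neg2 : ∀ f : ℝ × ℝ → ℝ, pd2 (fun y => -f y) x = -pd2 f x := by
    intro f; simp [pd2, fderiv_neg]
  refine ⟨?_, ?_, ?_⟩
  · rw [neg2, pd_comm hφ1]; ring
  · rw [neg1, pd_comm hφ2]; ring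
  · have h1 : pd1 (fun y => pd2 φ3 y + φ1 y) x
        = pd1 (fun y => pd2 φ3 y) x + pd1 φ1 x := by
      simp only [pd1]
      rw [fderiv_fun_add ((diff_pd2 hφ3) x) ((hφ1.differentiable (by norm_num)) x)]
      simp
    have h2 : pd2 (fun y => -pd1 φ3 y - φ2 y) x
        = -pd2 (fun y => pd1 φ3 y) x - pd2 φ2 x := by
      simp only [pd2]
      rw [fderiv_fun_sub ((diff_pd1 hφ3 x).fun_neg) ((hφ2.differentiable (by norm_num)) x),
        fderiv_fun_neg]
      simp
    rw [h1, h2, pd_comm hφ3]; ring
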